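/- For every continuous φ : ℤ_p → ℂ_p and every y ∈ ℤ_p, the formal power series identity (1 − t)^y · ∑_{n≥0} φ(n) tⁿ/n! = ∑_{n≥0} S^y(φ)(n) tⁿ/n! holds, where S^y(φ)(x) = ∑_{k=0}^∞ (-1)^k k! (y choose k)(x choose k) φ(x-k). -/

import Mathlib

open Finset

/-- `(x choose k)` on `ℤ_p`, valued in a normed `ℚ_p`-algebra `K` (modelling `ℂ_p`). -/
noncomputable def padicBinom (p : ℕ) [Fact p.Prime] (K : Type*) [NormedField K]
    [NormedAlgebra ℚ_[p] K] (x : ℤ_[p]) (k : ℕ) : K :=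
  algebraMap ℚ_[p] K ((∏ i ∈ Finset.range k, ((x : ℚ_[p]) - (i : ℚ_[p]))) / (k.factorial : ℚ_[p]))

/-- The operator `S^y`, `S^y(φ)(x) = ∑_{k≥0} (-1)^k k! (y choose k)(x choose k) φ(x-k)`. -/
noncomputable def Sop (p : ℕ) [Fact p.Prime] {K : Type*} [NormedField K]
    [NormedAlgebra ℚ_[p] K] (y : ℤ_[p]) (φ : ℤ_[p] → K) : ℤ_[p] → K :=
  fun x => ∑' k : ℕ,
    (-1 : K) ^ k * (k.factorial : K) * padicBinom p K y k * padicBinom p K x k * φ (x - (k : ℤ_[p]))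

/-- For continuous `φ : ℤ_p → ℂ_p` and `y ∈ ℤ_p`, the formal power series identity
`(1 − t)^y · ∑ φ(n) tⁿ/n! = ∑ S^y(φ)(n) tⁿ/n!` holds, where
`(1 − t)^y = ∑ (-1)ⁿ (y choose n) tⁿ`. -/
lemma prod_range_cast_sub {R : Type*} [CommRing R] (n k : ℕ) :
    (∏ i ∈ Finset.range k, ((n : R) - (i : R))) = (n.descFactorial k : R) := by
  induction k with
  | zero => simp
  | succ k ih =>
    rw [Finset.prod_range_succ, ih, Nat.descFactorial_succ, Nat.cast_mul]
    rcases le_or_gt k n with h | h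
    · rw [Nat.cast_sub h]; ring
    · rw [Nat.descFactorial_of_lt h]
      simp

lemma padicBinom_natCast (p : ℕ) [Fact p.Prime] (K : Type*) [NormedField K]
    [NormedAlgebra ℚ_[p] K] (n k : ℕ) :
    padicBinom p K (n : ℤ_[p]) k = (n.choose k : K) := by
  unfold padicBinom
  have h1 : ((((n : ℤ_[p])) : ℚ_[p])) = (n : ℚ_[p]) := by push_cast; ring
  rw [h1, prod_range_cast_sub, Nat.descFactorial_eq_factorial_mul_choose, Nat.cast_mul,
    mul_comm, mul_div_assoc, div_self (Nat.cast_ne_zero.mpr k.factorial_ne_zero), mul_one,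
    map_natCast]

lemma padicBinom_natCast_eq_zero (p : ℕ) [Fact p.Prime] (K : Type*) [NormedField K]
    [NormedAlgebra ℚ_[p] K] {n k : ℕ} (h : n < k) :
    padicBinom p K (n : ℤ_[p]) k = 0 := by
  rw [padicBinom_natCast, Nat.choose_eq_zero_of_lt h, Nat.cast_zero]

theorem one_sub_X_pow_mul_egf (p : ℕ) [Fact p.Prime] (K : Type*) [NontriviallyNormedField K]
    [NormedAlgebra ℚ_[p] K] [IsUltrametricDist K] [CompleteSpace K]
    (y : ℤ_[p]) (φ : ℤ_[p] → K) (hφ : Continuous φ) :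
    PowerSeries.mk (fun n => (-1 : K) ^ n * padicBinom p K y n) *
        PowerSeries.mk (fun n => φ (n : ℕ) / (n.factorial : K)) =
      PowerSeries.mk (fun n => Sop p y φ (n : ℕ) / (n.factorial : K)) := by
  ext n
  rw [PowerSeries.coeff_mul]
  simp only [PowerSeries.coeff_mk]
  -- compute the tsum as a finite sum
  have hS : Sop p y φ (n : ℤ_[p]) = ∑ k ∈ Finset.range (n + 1),
      (-1 : K) ^ k * (k.factorial : K) * padicBinom p K y k * padicBinom p K (n : ℤ_[p]) k *
        φ ((n : ℤ_[p]) - (k : ℤ_[p])) := by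
    unfold Sop
    apply tsum_eq_sum
    intro k hk
    rw [padicBinom_natCast_eq_zero p K (n := n) (k := k) (by simp only [Finset.mem_range] at hk; omega)]
    ring
  haveI : CharZero K := charZero_of_injective_algebraMap (algebraMap ℚ_[p] K).injective
  rw [hS, Finset.sum_div, Finset.Nat.sum_antidiagonal_eq_sum_range_succ_mk]
  refine Finset.sum_congr rfl fun k hk => ?_
  have hkn : k ≤ n := Nat.lt_succ_iff.mp (Finset.mem_range.mp hk)
  have harg : ((n : ℤ_[p]) - (k : ℤ_[p])) = ((n - k : ℕ) : ℤ_[p]) := by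
    rw [Nat.cast_sub hkn]
  rw [padicBinom_natCast, harg]
  have hfac : (n.choose k : K) * (k.factorial : K) * ((n - k).factorial : K) =
      (n.factorial : K) := by
    exact_mod_cast congrArg (Nat.cast : ℕ → K) (Nat.choose_mul_factorial_mul_factorial hkn)
  have h1 : ((n - k).factorial : K) ≠ 0 := Nat.cast_ne_zero.mpr (Nat.factorial_ne_zero _)
  have h2 : (n.factorial : K) ≠ 0 := Nat.cast_ne_zero.mpr (Nat.factorial_ne_zero _)
  field_simp
  linear_combination (-(padicBinom p K y k * φ ((n - k : ℕ) : ℤ_[p]))) * hfac
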